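/- (Discrete-time RAGE theorem, continuous part.) Let U be a unitary operator on ℓ²(ℤ,ℂ) and ψ ∈ ℓ²(ℤ,ℂ). Suppose there is a finite Borel measure μ on the unit circle ∂𝔻 with no atoms (μ({z}) = 0 for every z ∈ ∂𝔻) whose moments match ψ: ∫_{∂𝔻} zⁿ dμ(z) = ⟨ψ, Uⁿψ⟩ for all n ∈ ℤ (i.e. the spectral measure of ψ is continuous). Then for every J ∈ ℕ, lim_{N→∞} (1/(2N+1))·Σ_{n=−N}^{N} Σ_{j=−J}^{J} |⟨δ_j, Uⁿψ⟩|² = 0. -/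

import Mathlib

noncomputable section
open scoped ENNReal
open MeasureTheory

/-- The Hilbert space ℓ²(ℤ, ℂ). -/
abbrev l2Z := lp (fun _ : ℤ => ℂ) 2

/-- The standard orthonormal basis vector δ_j of ℓ²(ℤ, ℂ). -/
def delta (j : ℤ) : l2Z := lp.single 2 j (1 : ℂ)

open Finset

lemma zpow_measurable (k : ℤ) : Measurable (fun w : ℂ => w ^ k) := by measurability

lemma zpow_conj_measurable (k : ℤ) : Measurable (fun w : ℂ => (starRingEnd ℂ w) ^ k) :=
  (zpow_measurable k).comp Complex.continuous_conj.measurable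

lemma ae_sphere {μ : Measure ℂ} (hsupp : μ (Metric.sphere (0 : ℂ) 1)ᶜ = 0) :
    ∀ᵐ w ∂μ, ‖w‖ = 1 := by
  have : ∀ᵐ w ∂μ, w ∈ Metric.sphere (0:ℂ) 1 := by
    rw [MeasureTheory.ae_iff]
    convert hsupp using 2
    rfl
  filter_upwards [this] with w hw
  simpa [Metric.mem_sphere, dist_zero_right] using hw

lemma int_zpow {μ : Measure ℂ} [IsFiniteMeasure μ]
    (hsupp : μ (Metric.sphere (0 : ℂ) 1)ᶜ = 0) (k : ℤ) :
    Integrable (fun w : ℂ => w ^ k) μ := by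
  refine (integrable_const (1:ℝ)).mono' ((zpow_measurable k).aestronglyMeasurable) ?_
  filter_upwards [ae_sphere hsupp] with w hw
  rw [norm_zpow, hw, one_zpow]

lemma int_zpow_conj {μ : Measure ℂ} [IsFiniteMeasure μ]
    (hsupp : μ (Metric.sphere (0 : ℂ) 1)ᶜ = 0) (k : ℤ) :
    Integrable (fun w : ℂ => (starRingEnd ℂ w) ^ k) μ := by
  refine (integrable_const (1:ℝ)).mono' ((zpow_conj_measurable k).aestronglyMeasurable) ?_
  filter_upwards [ae_sphere hsupp] with w hw
  rw [norm_zpow, RCLike.norm_conj, hw, one_zpow]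

lemma card_Icc_int (M : ℕ) : (Finset.Icc (-(M:ℤ)) M).card = 2*M+1 := by
  rw [Int.card_Icc]; omega

lemma icc_eq_range_image (M : ℕ) :
    Finset.Icc (-(M:ℤ)) M = (Finset.range (2*M+1)).image (fun i : ℕ => (i:ℤ) - (M:ℤ)) := by
  ext k
  simp only [Finset.mem_Icc, Finset.mem_image, Finset.mem_range]
  constructor
  · rintro ⟨h1, h2⟩; exact ⟨(k + M).toNat, by omega, by omega⟩
  · rintro ⟨i, hi, rfl⟩; omega

lemma tendsto_inv_lin : Filter.Tendsto (fun M : ℕ => 1 / (2 * (M:ℝ) + 1))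
    Filter.atTop (nhds 0) := by
  have h : Filter.Tendsto (fun M : ℕ => 2 * (M:ℝ) + 1) Filter.atTop Filter.atTop := by
    apply Filter.tendsto_atTop_add_const_right
    exact (tendsto_natCast_atTop_atTop).const_mul_atTop (by norm_num)
  simpa [one_div, Pi.inv_def] using h.inv_tendsto_atTop

lemma dirichlet_bound {u : ℂ} (hu : ‖u‖ = 1) (hu1 : u ≠ 1) (M : ℕ) :
    ‖∑ k ∈ Finset.Icc (-(M:ℤ)) M, u ^ k‖ ≤ 2 / ‖u - 1‖ := by
  have hu0 : u ≠ 0 := by intro h; simp [h] at hu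
  have : ∑ k ∈ Finset.Icc (-(M:ℤ)) M, u ^ k
      = u ^ (-(M:ℤ)) * ((u ^ (2*M+1) - 1) / (u - 1)) := by
    rw [icc_eq_range_image, Finset.sum_image (by intro x _ y _ h; simp only [sub_left_inj, Nat.cast_inj] at h; exact h),
      ← geom_sum_eq hu1, Finset.mul_sum]
    refine Finset.sum_congr rfl fun i _ => ?_
    rw [← zpow_natCast u i, ← zpow_add₀ hu0]
    congr 1
    omega
  rw [this, norm_mul, norm_zpow, hu, one_zpow, one_mul, norm_div]
  gcongr
  calc ‖u ^ (2*M+1) - 1‖ ≤ ‖u ^ (2*M+1)‖ + ‖(1:ℂ)‖ := norm_sub_le _ _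
  _ ≤ 2 := by rw [norm_pow, hu]; norm_num

lemma wiener (μ : Measure ℂ) [IsFiniteMeasure μ]
    (hsupp : μ (Metric.sphere (0 : ℂ) 1)ᶜ = 0)
    (hatom : ∀ z : ℂ, μ {z} = 0) :
    Filter.Tendsto
      (fun M : ℕ => (1 / (2 * (M : ℝ) + 1)) *
        ∑ k ∈ Finset.Icc (-(M:ℤ)) M, ‖∫ w, w ^ k ∂μ‖ ^ 2)
      Filter.atTop (nhds 0) := by
  set ν := μ.prod μ with hν
  set H : ℕ → ℂ × ℂ → ℂ := fun M p =>
    (1 / (2 * (M : ℝ) + 1) : ℝ) * ∑ k ∈ Finset.Icc (-(M:ℤ)) M, p.1 ^ k * (starRingEnd ℂ p.2) ^ k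
    with hH
  have hint : ∀ k : ℤ, Integrable (fun p : ℂ × ℂ => p.1 ^ k * (starRingEnd ℂ p.2) ^ k) ν :=
    fun k => (int_zpow hsupp k).mul_prod (int_zpow_conj hsupp k)
  have hk : ∀ k : ℤ, ∫ p : ℂ × ℂ, p.1 ^ k * (starRingEnd ℂ p.2) ^ k ∂ν
      = (‖∫ w, w ^ k ∂μ‖ ^ 2 : ℝ) := by
    intro k
    rw [hν, integral_prod_mul (fun z : ℂ => z ^ k) (fun w : ℂ => (starRingEnd ℂ w) ^ k)]
    have : ∫ w, (starRingEnd ℂ w) ^ k ∂μ = starRingEnd ℂ (∫ w, w ^ k ∂μ) := by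
      rw [← integral_conj]
      exact integral_congr_ae (Filter.Eventually.of_forall fun w =>
        (map_zpow₀ (starRingEnd ℂ) w k).symm)
    rw [this, Complex.mul_conj']
    push_cast
    ring
  have hid : ∀ M : ℕ, ∫ p, H M p ∂ν
      = ((1 / (2 * (M : ℝ) + 1)) * ∑ k ∈ Finset.Icc (-(M:ℤ)) M, ‖∫ w, w ^ k ∂μ‖ ^ 2 : ℝ) := by
    intro M
    rw [hH]
    simp only
    rw [integral_const_mul, integral_finset_sum _ (fun k _ => hint k),
      Finset.sum_congr rfl (fun k _ => hk k)]
    push_cast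
    ring
  have haes : ∀ᵐ p ∂ν, ‖p.1‖ = 1 ∧ ‖p.2‖ = 1 ∧ p.1 ≠ p.2 := by
    have hdiag : ν {p : ℂ × ℂ | p.1 = p.2} = 0 := by
      have hm : MeasurableSet {p : ℂ × ℂ | p.1 = p.2} :=
        measurableSet_eq_fun measurable_fst measurable_snd
      rw [hν, MeasureTheory.Measure.prod_apply hm]
      have h' : ∀ x : ℂ, μ (Prod.mk x ⁻¹' {p : ℂ × ℂ | p.1 = p.2}) = 0 := by
        intro x
        have : (Prod.mk x ⁻¹' {p : ℂ × ℂ | p.1 = p.2}) = {x} := by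
          ext y; simp [eq_comm]
        rw [this]; exact hatom x
      simp [h', hatom]
    have h1 : ν ((Metric.sphere (0:ℂ) 1)ᶜ ×ˢ (Set.univ : Set ℂ)) = 0 := by
      rw [hν, MeasureTheory.Measure.prod_prod, hsupp, zero_mul]
    have h2 : ν ((Set.univ : Set ℂ) ×ˢ (Metric.sphere (0:ℂ) 1)ᶜ) = 0 := by
      rw [hν, MeasureTheory.Measure.prod_prod, hsupp, mul_zero]
    rw [MeasureTheory.ae_iff]
    refine measure_mono_null ?_ (measure_union_null (measure_union_null h1 h2) hdiag)
    intro p hp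
    simp only [Set.mem_setOf_eq, not_and, not_not] at hp
    by_cases k1 : ‖p.1‖ = 1
    · by_cases k2 : ‖p.2‖ = 1
      · right; exact hp k1 k2
      · left; right
        refine ⟨trivial, ?_⟩
        simp only [Set.mem_compl_iff, Metric.mem_sphere, dist_zero_right]; exact k2
    · left; left
      refine ⟨?_, trivial⟩
      simp only [Set.mem_compl_iff, Metric.mem_sphere, dist_zero_right]; exact k1
  have hconv : Filter.Tendsto (fun M : ℕ => ∫ p, H M p ∂ν) Filter.atTop (nhds 0) := by
    have h0 : (0 : ℂ) = ∫ _ : ℂ × ℂ, (0 : ℂ) ∂ν := by simp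
    rw [h0]
    refine tendsto_integral_filter_of_dominated_convergence (fun _ => (1:ℝ)) ?_ ?_ ?_ ?_
    · refine Filter.Eventually.of_forall fun M => ?_
      exact (((Finset.measurable_sum _ (fun k _ =>
        ((zpow_measurable k).comp measurable_fst).mul
        ((zpow_conj_measurable k).comp measurable_snd))).const_mul _)).aestronglyMeasurable
    · refine Filter.Eventually.of_forall fun M => ?_
      filter_upwards [haes] with p hps
      obtain ⟨h1, h2, -⟩ := hps
      have hc : (0:ℝ) < 2 * (M:ℝ) + 1 := by positivity
      have hS : ‖∑ k ∈ Finset.Icc (-(M:ℤ)) M, p.1 ^ k * (starRingEnd ℂ p.2) ^ k‖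
          ≤ 2*(M:ℝ)+1 := by
        calc ‖∑ k ∈ Finset.Icc (-(M:ℤ)) M, p.1 ^ k * (starRingEnd ℂ p.2) ^ k‖
            ≤ ∑ k ∈ Finset.Icc (-(M:ℤ)) M, ‖p.1 ^ k * (starRingEnd ℂ p.2) ^ k‖ :=
              norm_sum_le _ _
        _ ≤ 2*(M:ℝ)+1 := by
            have he : ∀ k ∈ Finset.Icc (-(M:ℤ)) M,
                ‖p.1 ^ k * (starRingEnd ℂ p.2) ^ k‖ = 1 := by
              intro k _
              rw [norm_mul, norm_zpow, norm_zpow, RCLike.norm_conj, h1, h2]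
              simp
            rw [Finset.sum_congr rfl he, Finset.sum_const, card_Icc_int]
            push_cast; simp
      rw [hH]
      simp only [norm_mul, Complex.norm_real, Real.norm_eq_abs, abs_of_nonneg (le_of_lt (by positivity : (0:ℝ) < 1 / (2*(M:ℝ)+1)))]
      calc (1 / (2*(M:ℝ)+1)) * ‖∑ k ∈ Finset.Icc (-(M:ℤ)) M, p.1 ^ k * (starRingEnd ℂ p.2) ^ k‖
          ≤ (1 / (2*(M:ℝ)+1)) * (2*(M:ℝ)+1) :=
            mul_le_mul_of_nonneg_left hS (by positivity)
      _ = 1 := by field_simp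
    · exact integrable_const 1
    · filter_upwards [haes] with p hps
      obtain ⟨h1, h2, h3⟩ := hps
      set u := p.1 * starRingEnd ℂ p.2 with hu
      have hun : ‖u‖ = 1 := by rw [hu, norm_mul, RCLike.norm_conj, h1, h2, one_mul]
      have hu1 : u ≠ 1 := by
        intro h
        apply h3
        have h2' : starRingEnd ℂ p.2 * p.2 = 1 := by
          rw [Complex.conj_mul', h2]; norm_num
        calc p.1 = p.1 * (starRingEnd ℂ p.2 * p.2) := by rw [h2', mul_one]
        _ = u * p.2 := by rw [hu]; ring
        _ = p.2 := by rw [h, one_mul]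
      have hsum : ∀ M : ℕ, H M p
          = (1 / (2 * (M : ℝ) + 1) : ℝ) * ∑ k ∈ Finset.Icc (-(M:ℤ)) M, u ^ k := by
        intro M
        rw [hH]
        simp only [hu]
        congr 1
        exact Finset.sum_congr rfl fun k _ => (mul_zpow _ _ _).symm
      rw [tendsto_zero_iff_norm_tendsto_zero]
      refine squeeze_zero (f := fun M : ℕ => ‖H M p‖)
        (g := fun M : ℕ => (2 / ‖u - 1‖) * (1 / (2 * (M : ℝ) + 1)))
        (fun M => norm_nonneg _) (fun M => ?_) ?_
      · rw [hsum, norm_mul, Complex.norm_real, Real.norm_eq_abs,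
          abs_of_nonneg (le_of_lt (by positivity : (0:ℝ) < 1 / (2*(M:ℝ)+1))), mul_comm]
        exact mul_le_mul_of_nonneg_right (dirichlet_bound hun hu1 M) (by positivity)
      · rw [show (0:ℝ) = (2 / ‖u - 1‖) * 0 by ring]
        exact tendsto_inv_lin.const_mul _
  have hre : Filter.Tendsto (fun M : ℕ => (∫ p, H M p ∂ν).re) Filter.atTop (nhds 0) := by
    simpa [Function.comp_def] using (Complex.continuous_re.tendsto 0).comp hconv
  exact hre.congr (fun M => by rw [hid M, Complex.ofReal_re])


lemma norm_delta (j : ℤ) : ‖delta j‖ = 1 := by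
  have := lp.norm_single (p := 2) (E := fun _ : ℤ => ℂ) (by norm_num) j (1:ℂ)
  simpa [delta] using this

lemma inner_UU (U : l2Z ≃ₗᵢ[ℂ] l2Z) (ψ : l2Z) (m n : ℤ) :
    (inner ℂ ((U^m) ψ) ((U^n) ψ) : ℂ) = inner ℂ ψ ((U^(n-m)) ψ) := by
  have h : U ^ n = U ^ m * U ^ (n - m) := by
    rw [← zpow_add]; congr 1; ring
  rw [h]
  exact LinearIsometryEquiv.inner_map_map (U^m) ψ ((U^(n-m)) ψ)

lemma c_bound (U : l2Z ≃ₗᵢ[ℂ] l2Z) (ψ : l2Z) (j n : ℤ) :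
    ‖(inner ℂ (delta j) ((U^n) ψ) : ℂ)‖ ≤ ‖ψ‖ := by
  calc ‖(inner ℂ (delta j) ((U^n) ψ) : ℂ)‖ ≤ ‖delta j‖ * ‖(U^n) ψ‖ := norm_inner_le_norm _ _
  _ = ‖ψ‖ := by rw [norm_delta, one_mul, LinearIsometryEquiv.norm_map]

lemma step2 (U : l2Z ≃ₗᵢ[ℂ] l2Z) (ψ : l2Z) (μ : Measure ℂ)
    (hmom : ∀ n : ℤ, ∫ w, w ^ n ∂μ = (inner ℂ ψ ((U ^ n) ψ) : ℂ)) (j : ℤ) (N : ℕ) :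
    (∑ n ∈ Finset.Icc (-(N:ℤ)) N, ‖(inner ℂ (delta j) ((U^n) ψ) : ℂ)‖^2)^2
    ≤ (∑ n ∈ Finset.Icc (-(3*N:ℤ)) (3*N), ‖(inner ℂ (delta j) ((U^n) ψ) : ℂ)‖^2)
      * (∑ k ∈ Finset.Icc (-(2*N:ℤ)) (2*N), ‖∫ w, w ^ k ∂μ‖) := by
  set c : ℤ → ℂ := fun n => inner ℂ (delta j) ((U^n) ψ) with hc
  set I : Finset ℤ := Finset.Icc (-(N:ℤ)) N with hI
  set K : Finset ℤ := Finset.Icc (-(2*N:ℤ)) (2*N) with hK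
  set v : l2Z := ∑ n ∈ I, (starRingEnd ℂ (c n)) • ((U^n) ψ) with hv
  set S : ℝ := ∑ n ∈ I, ‖c n‖^2 with hS
  set T : ℝ := ∑ n ∈ Finset.Icc (-(3*N:ℤ)) (3*N), ‖c n‖^2 with hT
  set B : ℝ := ∑ k ∈ K, ‖∫ w, w ^ k ∂μ‖ with hB
  have hS0 : 0 ≤ S := Finset.sum_nonneg fun n _ => by positivity
  -- h1 : inner ℂ (delta j) v = S
  have h1 : (inner ℂ (delta j) v : ℂ) = (S : ℝ) := by
    rw [hv, inner_sum]
    have : ∀ n ∈ I, (inner ℂ (delta j) ((starRingEnd ℂ (c n)) • ((U^n) ψ)) : ℂ)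
        = (‖c n‖^2 : ℝ) := by
      intro n _
      rw [inner_smul_right, show (inner ℂ (delta j) ((U^n) ψ) : ℂ) = c n from rfl,
        RCLike.conj_mul]
      norm_cast
    rw [Finset.sum_congr rfl this, hS]
    push_cast
    rfl
  -- h2 : S ≤ ‖v‖
  have h2 : S ≤ ‖v‖ := by
    have : S = ‖(inner ℂ (delta j) v : ℂ)‖ := by
      rw [h1, Complex.norm_real, Real.norm_eq_abs, abs_of_nonneg hS0]
    rw [this]
    calc ‖(inner ℂ (delta j) v : ℂ)‖ ≤ ‖delta j‖ * ‖v‖ := norm_inner_le_norm _ _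
    _ = ‖v‖ := by rw [norm_delta, one_mul]
  -- h3 : ‖v‖^2 ≤ double sum
  have h3 : ‖v‖^2 ≤ ∑ m ∈ I, ∑ n ∈ I, ‖c m‖ * ‖c n‖ * ‖∫ w, w ^ (n-m) ∂μ‖ := by
    have hvv : (inner ℂ v v : ℂ)
        = ∑ m ∈ I, ∑ n ∈ I, (c m) * (starRingEnd ℂ (c n)) * (∫ w, w ^ (n-m) ∂μ) := by
      rw [hv, sum_inner]
      refine Finset.sum_congr rfl fun m _ => ?_
      rw [inner_smul_left, inner_sum]
      rw [Finset.mul_sum]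
      refine Finset.sum_congr rfl fun n _ => ?_
      rw [inner_smul_right, hmom (n - m), ← inner_UU U ψ m n]
      simp only [RingHomCompTriple.comp_apply, RingHom.id_apply, starRingEnd_self_apply,
        star_star]
      ring
    have hn : ‖v‖^2 = ‖(inner ℂ v v : ℂ)‖ := by
      rw [inner_self_eq_norm_sq_to_K]
      simp [abs_of_nonneg (norm_nonneg v)]
    rw [hn, hvv]
    calc ‖∑ m ∈ I, ∑ n ∈ I, (c m) * (starRingEnd ℂ (c n)) * (∫ w, w ^ (n-m) ∂μ)‖
        ≤ ∑ m ∈ I, ‖∑ n ∈ I, (c m) * (starRingEnd ℂ (c n)) * (∫ w, w ^ (n-m) ∂μ)‖ :=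
          norm_sum_le _ _
    _ ≤ ∑ m ∈ I, ∑ n ∈ I, ‖c m‖ * ‖c n‖ * ‖∫ w, w ^ (n-m) ∂μ‖ := by
        refine Finset.sum_le_sum fun m _ => ?_
        calc ‖∑ n ∈ I, (c m) * (starRingEnd ℂ (c n)) * (∫ w, w ^ (n-m) ∂μ)‖
            ≤ ∑ n ∈ I, ‖(c m) * (starRingEnd ℂ (c n)) * (∫ w, w ^ (n-m) ∂μ)‖ := norm_sum_le _ _
        _ = ∑ n ∈ I, ‖c m‖ * ‖c n‖ * ‖∫ w, w ^ (n-m) ∂μ‖ := by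
            refine Finset.sum_congr rfl fun n _ => ?_
            rw [norm_mul, norm_mul, RCLike.norm_conj]
  -- h4 : double sum ≤ T * B
  have h4 : ∑ m ∈ I, ∑ n ∈ I, ‖c m‖ * ‖c n‖ * ‖∫ w, w ^ (n-m) ∂μ‖ ≤ T * B := by
    have hT0 : ∀ k ∈ K, ∑ m ∈ I, ‖c m‖ * ‖c (m+k)‖ ≤ T := by
      intro k hk
      have e1 : ∑ m ∈ I, ‖c m‖^2 ≤ T := by
        refine Finset.sum_le_sum_of_subset_of_nonneg ?_ (fun n _ _ => by positivity)
        intro n hn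
        simp only [hI, Finset.mem_Icc] at hn ⊢
        omega
      have e2 : ∑ m ∈ I, ‖c (m+k)‖^2 ≤ T := by
        have : ∑ m ∈ I, ‖c (m+k)‖^2
            = ∑ n ∈ I.map ⟨fun m => m + k, add_left_injective k⟩, ‖c n‖^2 := by
          rw [Finset.sum_map]
          rfl
        rw [this]
        refine Finset.sum_le_sum_of_subset_of_nonneg ?_ (fun n _ _ => by positivity)
        intro n hn
        simp only [hI, hK, Finset.mem_map, Finset.mem_Icc, Function.Embedding.coeFn_mk] at hn ⊢
        simp only [hK, Finset.mem_Icc] at hk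
        omega
      calc ∑ m ∈ I, ‖c m‖ * ‖c (m+k)‖ ≤ ∑ m ∈ I, (‖c m‖^2 + ‖c (m+k)‖^2)/2 := by
            refine Finset.sum_le_sum fun m _ => ?_
            nlinarith [sq_nonneg (‖c m‖ - ‖c (m+k)‖)]
      _ = ((∑ m ∈ I, ‖c m‖^2) + (∑ m ∈ I, ‖c (m+k)‖^2))/2 := by
            rw [← Finset.sum_add_distrib, Finset.sum_div]
      _ ≤ T := by linarith
    calc ∑ m ∈ I, ∑ n ∈ I, ‖c m‖ * ‖c n‖ * ‖∫ w, w ^ (n-m) ∂μ‖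
        ≤ ∑ m ∈ I, ∑ k ∈ K, ‖c m‖ * ‖c (m+k)‖ * ‖∫ w, w ^ k ∂μ‖ := by
          refine Finset.sum_le_sum fun m hm => ?_
          have hsub : I ⊆ K.map ⟨fun k => m + k, add_right_injective m⟩ := by
            intro n hn
            simp only [hI, Finset.mem_Icc] at hn
            simp only [hI, Finset.mem_Icc] at hm
            simp only [hK, Finset.mem_map, Finset.mem_Icc, Function.Embedding.coeFn_mk]
            exact ⟨n - m, by omega, by omega⟩
          calc ∑ n ∈ I, ‖c m‖ * ‖c n‖ * ‖∫ w, w ^ (n-m) ∂μ‖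
              ≤ ∑ n ∈ K.map ⟨fun k => m + k, add_right_injective m⟩,
                  ‖c m‖ * ‖c n‖ * ‖∫ w, w ^ (n-m) ∂μ‖ :=
                Finset.sum_le_sum_of_subset_of_nonneg hsub (fun n _ _ => by positivity)
          _ = ∑ k ∈ K, ‖c m‖ * ‖c (m+k)‖ * ‖∫ w, w ^ k ∂μ‖ := by
                rw [Finset.sum_map]
                refine Finset.sum_congr rfl fun k _ => ?_
                simp only [Function.Embedding.coeFn_mk]
                have : m + k - m = k := by ring
                rw [this]
    _ = ∑ k ∈ K, (∑ m ∈ I, ‖c m‖ * ‖c (m+k)‖) * ‖∫ w, w ^ k ∂μ‖ := by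
          rw [Finset.sum_comm]
          refine Finset.sum_congr rfl fun k _ => ?_
          rw [Finset.sum_mul]
    _ ≤ ∑ k ∈ K, T * ‖∫ w, w ^ k ∂μ‖ := by
          refine Finset.sum_le_sum fun k hk => ?_
          exact mul_le_mul_of_nonneg_right (hT0 k hk) (norm_nonneg _)
    _ = T * B := by rw [hB, Finset.mul_sum]
  calc S^2 ≤ ‖v‖^2 := by nlinarith
  _ ≤ T * B := le_trans h3 h4


lemma avg_abs_le (f : ℤ → ℝ) (hpos : ∀ k, 0 ≤ f k) (N : ℕ) :
    (1/(2*(N:ℝ)+1)) * ∑ k ∈ Finset.Icc (-(2*(N:ℤ))) (2*(N:ℤ)), f k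
    ≤ 2 * Real.sqrt ((1/(2*((2*N : ℕ):ℝ)+1)) *
        ∑ k ∈ Finset.Icc (-((2*N:ℕ):ℤ)) ((2*N:ℕ):ℤ), f k ^ 2) := by
  rw [show ((2*N:ℕ):ℤ) = 2*(N:ℤ) from by push_cast; ring,
    show ((2*N:ℕ):ℝ) = 2*(N:ℝ) from by push_cast; ring]
  set B := ∑ k ∈ Finset.Icc (-(2*(N:ℤ))) (2*(N:ℤ)), f k with hB
  set Sq := ∑ k ∈ Finset.Icc (-(2*(N:ℤ))) (2*(N:ℤ)), f k ^ 2 with hSq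
  have hB0 : 0 ≤ B := Finset.sum_nonneg fun k _ => hpos k
  have hSq0 : 0 ≤ Sq := Finset.sum_nonneg fun k _ => by positivity
  have hcard : ((Finset.Icc (-(2*(N:ℤ))) (2*(N:ℤ))).card : ℝ) = 4*(N:ℝ)+1 := by
    rw [Int.card_Icc, show (2*(N:ℤ)+1 - -(2*(N:ℤ))).toNat = 4*N+1 from by omega]
    push_cast; ring
  have hB2 : B^2 ≤ (4*(N:ℝ)+1) * Sq := by
    have := sq_sum_le_card_mul_sum_sq (s := Finset.Icc (-(2*(N:ℤ))) (2*(N:ℤ))) (f := f)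
    rw [hcard] at this
    exact this
  have hx : (0:ℝ) < 2*(N:ℝ)+1 := by positivity
  have h4 : 2 * Real.sqrt ((1/(2*(2*(N:ℝ))+1)) * Sq)
      = Real.sqrt (2^2 * ((1/(2*(2*(N:ℝ))+1)) * Sq)) := by
    rw [Real.sqrt_mul (show (0:ℝ) ≤ 2^2 by norm_num) ((1/(2*(2*(N:ℝ))+1)) * Sq),
      Real.sqrt_sq (by norm_num)]
  rw [h4, Real.le_sqrt (by positivity) (by positivity)]
  have e1 : ((1/(2*(N:ℝ)+1)) * B)^2 = B^2/(2*(N:ℝ)+1)^2 := by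
    rw [div_mul_eq_mul_div, one_mul, div_pow]
  have e2 : (2:ℝ)^2 * ((1/(2*(2*(N:ℝ))+1)) * Sq) = 4*Sq/(2*(2*(N:ℝ))+1) := by ring
  rw [e1, e2, div_le_div_iff₀ (by positivity) (by positivity)]
  have hN0 : (0:ℝ) ≤ (N:ℝ) := Nat.cast_nonneg N
  nlinarith [mul_le_mul_of_nonneg_right hB2 (show (0:ℝ) ≤ 2*(2*(N:ℝ))+1 by positivity),
    hSq0, mul_nonneg hSq0 hN0]

set_option maxHeartbeats 1000000 in
/-- discrete-time RAGE theorem, continuous part. If the spectral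
measure of ψ (a finite measure on ∂𝔻 with moments ⟨ψ, Uⁿψ⟩) has no atoms, then the
time-averaged probability of finding Uⁿψ in any fixed finite box tends to zero. -/
theorem rage_continuous
    (U : l2Z ≃ₗᵢ[ℂ] l2Z) (ψ : l2Z)
    (μ : Measure ℂ) [IsFiniteMeasure μ]
    (hsupp : μ (Metric.sphere (0 : ℂ) 1)ᶜ = 0)
    (hatom : ∀ z : ℂ, μ {z} = 0)
    (hmom : ∀ n : ℤ, ∫ w, w ^ n ∂μ = (inner ℂ ψ ((U ^ n) ψ) : ℂ)) :
    ∀ J : ℕ,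
      Filter.Tendsto
        (fun N : ℕ => (1 / (2 * (N : ℝ) + 1)) *
          ∑ n ∈ Finset.Icc (-(N : ℤ)) (N : ℤ),
            ∑ j ∈ Finset.Icc (-(J : ℤ)) (J : ℤ),
              ‖(inner ℂ (delta j) ((U ^ n) ψ) : ℂ)‖ ^ 2)
        Filter.atTop (nhds 0) := by
  intro J
  set β : ℕ → ℝ := fun N =>
    (1/(2*(N:ℝ)+1)) * ∑ k ∈ Finset.Icc (-(2*(N:ℤ))) (2*(N:ℤ)), ‖∫ w, w ^ k ∂μ‖ with hβdef
  have hβ0 : ∀ N, 0 ≤ β N := by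
    intro N
    have : (0:ℝ) ≤ ∑ k ∈ Finset.Icc (-(2*(N:ℤ))) (2*(N:ℤ)), ‖∫ w, w ^ k ∂μ‖ :=
      Finset.sum_nonneg fun k _ => norm_nonneg _
    positivity
  -- β tends to 0
  have hβ : Filter.Tendsto β Filter.atTop (nhds 0) := by
    have hW := wiener μ hsupp hatom
    have h2N : Filter.Tendsto (fun N : ℕ => 2*N) Filter.atTop Filter.atTop := by
      have h2 : ∀ n : ℕ, n ≤ 2*n := fun n => by omega
      exact Filter.tendsto_atTop_mono h2 Filter.tendsto_id
    have hW2 := hW.comp h2N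
    refine squeeze_zero (f := β)
      (g := fun N => 2 * Real.sqrt ((1/(2*((2*N : ℕ):ℝ)+1)) *
        ∑ k ∈ Finset.Icc (-((2*N:ℕ):ℤ)) ((2*N:ℕ):ℤ), ‖∫ w, w ^ k ∂μ‖ ^ 2)) hβ0
      (fun N => avg_abs_le _ (fun k => norm_nonneg _) N) ?_
    have := (hW2.sqrt).const_mul (2:ℝ)
    simpa using this
  -- pointwise key bound
  have key : ∀ (N : ℕ) (j : ℤ),
      (1/(2*(N:ℝ)+1)) * (∑ n ∈ Finset.Icc (-(N:ℤ)) N, ‖(inner ℂ (delta j) ((U^n) ψ) : ℂ)‖^2)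
      ≤ Real.sqrt (3*‖ψ‖^2 * β N) := by
    intro N j
    set S := ∑ n ∈ Finset.Icc (-(N:ℤ)) N, ‖(inner ℂ (delta j) ((U^n) ψ) : ℂ)‖^2 with hSdef
    set T := ∑ n ∈ Finset.Icc (-(3*N:ℤ)) (3*N), ‖(inner ℂ (delta j) ((U^n) ψ) : ℂ)‖^2 with hTdef
    set B := ∑ k ∈ Finset.Icc (-(2*N:ℤ)) (2*N), ‖∫ w, w ^ k ∂μ‖ with hBdef
    have hs2 : S^2 ≤ T * B := step2 U ψ μ hmom j N
    have hS0 : 0 ≤ S := Finset.sum_nonneg fun n _ => by positivity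
    have hB0 : 0 ≤ B := Finset.sum_nonneg fun k _ => norm_nonneg _
    have hT : T ≤ (6*(N:ℝ)+1) * ‖ψ‖^2 := by
      calc T ≤ ∑ _n ∈ Finset.Icc (-(3*N:ℤ)) (3*N), ‖ψ‖^2 := by
            refine Finset.sum_le_sum fun n _ => ?_
            exact pow_le_pow_left₀ (norm_nonneg _) (c_bound U ψ j n) 2
      _ = (6*(N:ℝ)+1) * ‖ψ‖^2 := by
            rw [Finset.sum_const, Int.card_Icc,
              show (3*(N:ℤ)+1 - -(3*(N:ℤ))).toNat = 6*N+1 from by omega, nsmul_eq_mul]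
            push_cast; ring
    have hx : (0:ℝ) < 2*(N:ℝ)+1 := by positivity
    have hβN : β N = (1/(2*(N:ℝ)+1)) * B := rfl
    have h5 : S^2 ≤ (6*(N:ℝ)+3) * (‖ψ‖^2 * B) := by
      nlinarith [mul_le_mul_of_nonneg_right hT hB0, sq_nonneg ‖ψ‖]
    have hy : (0:ℝ) ≤ 3*‖ψ‖^2 * β N := by
      have := hβ0 N; positivity
    rw [Real.le_sqrt (by positivity) hy, hβN]
    have e : 3*‖ψ‖^2*((1/(2*(N:ℝ)+1))*B) = ((6*(N:ℝ)+3) * (‖ψ‖^2*B)) * (1/(2*(N:ℝ)+1))^2 := by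
      field_simp
      ring
    calc (1/(2*(N:ℝ)+1) * S)^2 = S^2 * (1/(2*(N:ℝ)+1))^2 := by ring
    _ ≤ ((6*(N:ℝ)+3) * (‖ψ‖^2*B)) * (1/(2*(N:ℝ)+1))^2 :=
        mul_le_mul_of_nonneg_right h5 (by positivity)
    _ = 3*‖ψ‖^2*((1/(2*(N:ℝ)+1))*B) := e.symm
  -- squeeze
  refine squeeze_zero (f := fun N : ℕ => (1 / (2 * (N : ℝ) + 1)) *
      ∑ n ∈ Finset.Icc (-(N : ℤ)) (N : ℤ), ∑ j ∈ Finset.Icc (-(J : ℤ)) (J : ℤ),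
        ‖(inner ℂ (delta j) ((U ^ n) ψ) : ℂ)‖ ^ 2)
    (g := fun N => (2*(J:ℝ)+1) * Real.sqrt (3*‖ψ‖^2 * β N)) ?_ ?_ ?_
  · intro N
    have : (0:ℝ) ≤ ∑ n ∈ Finset.Icc (-(N : ℤ)) (N : ℤ), ∑ j ∈ Finset.Icc (-(J : ℤ)) (J : ℤ),
        ‖(inner ℂ (delta j) ((U ^ n) ψ) : ℂ)‖ ^ 2 :=
      Finset.sum_nonneg fun n _ => Finset.sum_nonneg fun j _ => by positivity
    positivity
  · intro N
    rw [Finset.sum_comm, Finset.mul_sum]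
    calc ∑ j ∈ Finset.Icc (-(J : ℤ)) (J : ℤ), (1 / (2 * (N:ℝ) + 1)) *
          ∑ n ∈ Finset.Icc (-(N : ℤ)) (N : ℤ), ‖(inner ℂ (delta j) ((U ^ n) ψ) : ℂ)‖ ^ 2
        ≤ ∑ _j ∈ Finset.Icc (-(J : ℤ)) (J : ℤ), Real.sqrt (3*‖ψ‖^2 * β N) :=
          Finset.sum_le_sum fun j _ => key N j
    _ = (2*(J:ℝ)+1) * Real.sqrt (3*‖ψ‖^2 * β N) := by
        rw [Finset.sum_const, card_Icc_int, nsmul_eq_mul]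
        push_cast; ring
  · have h0 : Filter.Tendsto (fun N => 3*‖ψ‖^2 * β N) Filter.atTop (nhds (3*‖ψ‖^2*0)) :=
      hβ.const_mul _
    rw [mul_zero] at h0
    have h1 := h0.sqrt
    rw [Real.sqrt_zero] at h1
    have h2 := h1.const_mul (2*(J:ℝ)+1)
    rw [mul_zero] at h2
    exact h2
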